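/- For the Brezis–Nirenberg bump function on a cube S ⊂ R^n, there is a modulus of continuity θ (independent of S and μ) such that the modulus of mean oscillation satisfies ω_S(ψ^μ_S, t) ≤ (1/μ)·θ(2^μ t / ℓ(S)) for all t > 0. In particular ‖ψ^μ_S‖_{BMO(S)} ≤ C/μ. -/

import Mathlib

open MeasureTheory

/-- Distance between two sets: `inf { dist x y : x ∈ A, y ∈ B }`. -/
noncomputable def setDist {α : Type*} [PseudoMetricSpace α] (A B : Set α) : ℝ :=
  sInf (Set.image2 dist A B)

/-- The axis-parallel cube with lower corner `a` and side length `ℓ`. -/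
def cube {n : ℕ} (a : EuclideanSpace ℝ (Fin n)) (ℓ : ℝ) : Set (EuclideanSpace ℝ (Fin n)) :=
  {x | ∀ i, a i ≤ x i ∧ x i ≤ a i + ℓ}

/-- The Brezis–Nirenberg bump function `ψ^μ_S` on the cube `S = cube a ℓ`:
`ψ^μ_S(x) = (1 − (1/μ) log₂(ℓ(S)/(4 d(x,∂S))))₊` when `d(x,∂S) < ℓ(S)/4`, and `1`
otherwise (the value for `d = 0` being interpreted as `0`). -/
noncomputable def bumpS {n : ℕ} (a : EuclideanSpace ℝ (Fin n)) (ℓ : ℝ) (μ : ℕ)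
    (x : EuclideanSpace ℝ (Fin n)) : ℝ :=
  if Metric.infDist x (frontier (cube a ℓ)) < ℓ / 4 then
    (if Metric.infDist x (frontier (cube a ℓ)) = 0 then 0
     else max 0 (1 - (1 / (μ : ℝ)) *
        Real.logb 2 (ℓ / (4 * Metric.infDist x (frontier (cube a ℓ))))))
  else 1

/-- The double-average oscillation of `f` on a cube `Q`. -/
noncomputable def oscQ {n : ℕ} (f : EuclideanSpace ℝ (Fin n) → ℝ)
    (Q : Set (EuclideanSpace ℝ (Fin n))) : ℝ :=
  ((volume Q).toReal ^ 2)⁻¹ * ∫ x in Q, ∫ y in Q, |f x - f y|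

/-- The modulus of mean oscillation of `f` on `S`: the supremum of the double-average
oscillation over interior cubes `Q ⊆ S` (i.e. `diam Q ≤ d(Q, ∂S)`) of side length `< t`. -/
noncomputable def omegaMod {n : ℕ} (f : EuclideanSpace ℝ (Fin n) → ℝ)
    (S : Set (EuclideanSpace ℝ (Fin n))) (t : ℝ) : ℝ :=
  sSup {r : ℝ | ∃ (b : EuclideanSpace ℝ (Fin n)) (ℓQ : ℝ), 0 < ℓQ ∧
    cube b ℓQ ⊆ S ∧ Metric.diam (cube b ℓQ) ≤ setDist (cube b ℓQ) (frontier S) ∧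
    ℓQ < t ∧ r = oscQ f (cube b ℓQ)}

/-- A modulus of continuity: bounded, nonnegative, nondecreasing on `[0,∞)`, vanishing
continuously at `0`. -/
def IsModulus (θ : ℝ → ℝ) : Prop :=
  (∀ t, 0 ≤ t → 0 ≤ θ t) ∧ MonotoneOn θ (Set.Ici 0) ∧ BddAbove (θ '' Set.Ici 0) ∧
    θ 0 = 0 ∧ ContinuousWithinAt θ (Set.Ici 0) 0

-- helper lemmas
lemma clamp_lip (s t : ℝ) : |max 0 (min 1 s) - max 0 (min 1 t)| ≤ |s - t| := by
  have h1 : |max 0 (min 1 s) - max 0 (min 1 t)| ≤ |min 1 s - min 1 t| := by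
    rw [max_comm 0 (min 1 s), max_comm 0 (min 1 t)]
    exact abs_max_sub_max_le_abs _ _ _
  refine h1.trans ?_
  have := abs_min_sub_min_le_max 1 s 1 t
  simpa using this

lemma cube_dist_le {n : ℕ} {b : EuclideanSpace ℝ (Fin n)} {ℓ : ℝ} (hℓ : 0 ≤ ℓ)
    {x y : EuclideanSpace ℝ (Fin n)} (hx : x ∈ cube b ℓ) (hy : y ∈ cube b ℓ) :
    dist x y ≤ Real.sqrt n * ℓ := by
  rw [EuclideanSpace.dist_eq]
  have h1 : ∑ i, dist (x i) (y i) ^ 2 ≤ (n : ℝ) * ℓ ^ 2 := by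
    calc ∑ i, dist (x i) (y i) ^ 2 ≤ ∑ _i : Fin n, ℓ ^ 2 := by
          apply Finset.sum_le_sum
          intro i _
          have hxi := hx i; have hyi := hy i
          have : |x i - y i| ≤ ℓ := by
            rw [abs_sub_le_iff]; constructor <;> linarith [hxi.1, hxi.2, hyi.1, hyi.2]
          calc dist (x i) (y i) ^ 2 = |x i - y i| ^ 2 := by rw [Real.dist_eq]
            _ ≤ ℓ ^ 2 := by
                apply sq_le_sq' <;> [linarith [abs_nonneg (x i - y i)]; exact this]
      _ = (n : ℝ) * ℓ ^ 2 := by simp [Finset.sum_const, mul_comm]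
  calc Real.sqrt (∑ i, dist (x i) (y i) ^ 2) ≤ Real.sqrt ((n : ℝ) * ℓ ^ 2) :=
        Real.sqrt_le_sqrt h1
    _ = Real.sqrt n * ℓ := by
        rw [Real.sqrt_mul (Nat.cast_nonneg n), Real.sqrt_sq hℓ]

lemma isClosed_cube {n : ℕ} (b : EuclideanSpace ℝ (Fin n)) (ℓ : ℝ) : IsClosed (cube b ℓ) := by
  have : cube b ℓ = ⋂ i, {x : EuclideanSpace ℝ (Fin n) | x i ∈ Set.Icc (b i) (b i + ℓ)} := by
    ext x; simp [cube, Set.mem_iInter, Set.mem_Icc]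
  rw [this]
  refine isClosed_iInter fun i => ?_
  exact IsClosed.preimage (EuclideanSpace.proj (𝕜 := ℝ) i).continuous isClosed_Icc

lemma isCompact_cube {n : ℕ} (b : EuclideanSpace ℝ (Fin n)) {ℓ : ℝ} (hℓ : 0 ≤ ℓ) :
    IsCompact (cube b ℓ) := by
  apply Metric.isCompact_of_isClosed_isBounded (isClosed_cube b ℓ)
  rw [Metric.isBounded_iff]
  exact ⟨Real.sqrt n * ℓ, fun x hx y hy => cube_dist_le hℓ hx hy⟩

lemma diam_cube_le {n : ℕ} (b : EuclideanSpace ℝ (Fin n)) {ℓ : ℝ} (hℓ : 0 ≤ ℓ) :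
    Metric.diam (cube b ℓ) ≤ Real.sqrt n * ℓ :=
  Metric.diam_le_of_forall_dist_le (by positivity) fun x hx y hy => cube_dist_le hℓ hx hy

lemma bump_eq {n : ℕ} {a : EuclideanSpace ℝ (Fin n)} {ℓ : ℝ} (hℓ : 0 < ℓ) {μ : ℕ} (hμ : 1 ≤ μ)
    {x : EuclideanSpace ℝ (Fin n)} (hd : 0 < Metric.infDist x (frontier (cube a ℓ))) :
    bumpS a ℓ μ x = max 0 (min 1 (1 + (1 / (μ : ℝ)) *
      Real.logb 2 (4 * Metric.infDist x (frontier (cube a ℓ)) / ℓ))) := by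
  set d := Metric.infDist x (frontier (cube a ℓ)) with hdd
  have hc : (0 : ℝ) ≤ 1 / (μ : ℝ) := by positivity
  have hkey : (1 : ℝ) - (1 / (μ : ℝ)) * Real.logb 2 (ℓ / (4 * d))
      = 1 + (1 / (μ : ℝ)) * Real.logb 2 (4 * d / ℓ) := by
    have : ℓ / (4 * d) = (4 * d / ℓ)⁻¹ := by
      field_simp
    rw [this, Real.logb_inv]; ring
  unfold bumpS
  rw [← hdd]
  by_cases h : d < ℓ / 4
  · rw [if_pos h, if_neg hd.ne']
    rw [hkey]
    have hlb : Real.logb 2 (4 * d / ℓ) ≤ 0 := by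
      apply Real.logb_nonpos one_lt_two (by positivity)
      rw [div_le_one hℓ]; linarith
    have : 1 + (1 / (μ : ℝ)) * Real.logb 2 (4 * d / ℓ) ≤ 1 := by
      nlinarith
    rw [min_eq_right this]
  · rw [if_neg h]
    push_neg at h
    have hlb : 0 ≤ Real.logb 2 (4 * d / ℓ) := by
      apply Real.logb_nonneg one_lt_two
      rw [le_div_iff₀ hℓ]; linarith
    have h1 : (1:ℝ) ≤ 1 + (1 / (μ : ℝ)) * Real.logb 2 (4 * d / ℓ) := by nlinarith
    rw [min_eq_left h1, max_eq_right zero_le_one]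

lemma setDist_le_infDist {α : Type*} [PseudoMetricSpace α] {A B : Set α} {x : α}
    (hx : x ∈ A) (hB : B.Nonempty) : setDist A B ≤ Metric.infDist x B := by
  rw [Metric.infDist_eq_iInf]
  haveI := hB.to_subtype
  apply le_ciInf
  intro p
  apply csInf_le
  · exact ⟨0, fun z hz => by
      obtain ⟨u, hu, v, hv, rfl⟩ := hz
      exact dist_nonneg⟩
  · exact Set.mem_image2_of_mem hx p.2

lemma infDist_le_setDist_add_diam {α : Type*} [PseudoMetricSpace α] {A B : Set α} {x : α}
    (hx : x ∈ A) (hB : B.Nonempty) (hbd : Bornology.IsBounded A) :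
    Metric.infDist x B ≤ setDist A B + Metric.diam A := by
  have hne : (Set.image2 dist A B).Nonempty := Set.Nonempty.image2 ⟨x, hx⟩ hB
  have : Metric.infDist x B - Metric.diam A ≤ setDist A B := by
    apply le_csInf hne
    rintro z ⟨q, hq, p, hp, rfl⟩
    have h1 : Metric.infDist x B ≤ dist x p := Metric.infDist_le_dist_of_mem hp
    have h2 : dist x p ≤ dist x q + dist q p := dist_triangle x q p
    have h3 : dist x q ≤ Metric.diam A := Metric.dist_le_diam_of_mem hbd hx hq
    linarith
  linarith

lemma bump_pair_bound {n : ℕ} (a b : EuclideanSpace ℝ (Fin n)) {ℓ ℓQ : ℝ}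
    (hℓ : 0 < ℓ) (hℓQ : 0 < ℓQ) {μ : ℕ} (hμ : 1 ≤ μ)
    (hdiam : Metric.diam (cube b ℓQ) ≤ setDist (cube b ℓQ) (frontier (cube a ℓ)))
    {x y : EuclideanSpace ℝ (Fin n)} (hx : x ∈ cube b ℓQ) (hy : y ∈ cube b ℓQ) :
    |bumpS a ℓ μ x - bumpS a ℓ μ y| ≤
      (1 / (μ : ℝ)) * min 1 ((8 * Real.sqrt n / Real.log 2) * ((2 : ℝ) ^ μ * ℓQ / ℓ)) := by
  have hμR : (0 : ℝ) < (μ : ℝ) := by exact_mod_cast Nat.pos_of_ne_zero (by omega)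
  have hc : (0 : ℝ) ≤ 1 / (μ : ℝ) := by positivity
  have hlog2 : 0 < Real.log 2 := Real.log_pos one_lt_two
  have hP : (0 : ℝ) < (2 : ℝ) ^ μ := by positivity
  have hRHS : 0 ≤ (1 / (μ : ℝ)) *
      min 1 ((8 * Real.sqrt n / Real.log 2) * ((2 : ℝ) ^ μ * ℓQ / ℓ)) := by
    apply mul_nonneg hc
    apply le_min zero_le_one
    positivity
  set F := frontier (cube a ℓ) with hF
  by_cases hFne : F.Nonempty
  swap
  · rw [Set.not_nonempty_iff_eq_empty] at hFne
    have hb0 : ∀ z : EuclideanSpace ℝ (Fin n), bumpS a ℓ μ z = 0 := by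
      intro z
      simp [bumpS, ← hF, hFne, Metric.infDist_empty, show (0:ℝ) < ℓ / 4 by linarith]
    rw [hb0 x, hb0 y, sub_self, abs_zero]; exact hRHS
  have hbd : Bornology.IsBounded (cube b ℓQ) := (isCompact_cube b hℓQ.le).isBounded
  set D := setDist (cube b ℓQ) F with hD
  have hDdx : D ≤ Metric.infDist x F := setDist_le_infDist hx hFne
  have hDdy : D ≤ Metric.infDist y F := setDist_le_infDist hy hFne
  have hlip : |Metric.infDist x F - Metric.infDist y F| ≤ dist x y := by
    have := (Metric.lipschitz_infDist_pt F).dist_le_mul x y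
    simpa [Real.dist_eq] using this
  have hdistD : dist x y ≤ D := le_trans (Metric.dist_le_diam_of_mem hbd hx hy) hdiam
  rcases le_or_gt D 0 with hD0 | hD0
  · have hxy : x = y := eq_of_dist_eq_zero (le_antisymm (hdistD.trans hD0) dist_nonneg)
    rw [hxy, sub_self, abs_zero]; exact hRHS
  set dx := Metric.infDist x F with hdxdef
  set dy := Metric.infDist y F with hdydef
  have hdx : 0 < dx := hD0.trans_le hDdx
  have hdy : 0 < dy := hD0.trans_le hDdy
  by_cases hz : bumpS a ℓ μ x = 0 ∧ bumpS a ℓ μ y = 0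
  · rw [hz.1, hz.2, sub_self, abs_zero]; exact hRHS
  -- some point of the cube has nonzero bump value; deduce D ≥ ℓ / (8 * 2^μ)
  have hclaim : ∀ z ∈ cube b ℓQ, bumpS a ℓ μ z ≠ 0 → ℓ / (8 * (2:ℝ) ^ μ) ≤ D := by
    intro z hzQ hzne
    have hdz : 0 < Metric.infDist z F := hD0.trans_le (setDist_le_infDist hzQ hFne)
    rw [bump_eq hℓ hμ hdz] at hzne
    set u := 1 + (1 / (μ : ℝ)) * Real.logb 2 (4 * Metric.infDist z F / ℓ) with hu
    have hupos : 0 < u := by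
      by_contra hle
      push_neg at hle
      have : min 1 u ≤ 0 := le_trans (min_le_right _ _) hle
      exact hzne (max_eq_left this)
    have hlogb : -(μ:ℝ) < Real.logb 2 (4 * Metric.infDist z F / ℓ) := by
      by_contra hle
      push_neg at hle
      have : (1 / (μ : ℝ)) * Real.logb 2 (4 * Metric.infDist z F / ℓ) ≤ (1/(μ:ℝ)) * (-(μ:ℝ)) :=
        mul_le_mul_of_nonneg_left hle hc
      have h1 : (1/(μ:ℝ)) * (-(μ:ℝ)) = -1 := by field_simp
      rw [h1] at this
      rw [hu] at hupos; linarith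
    rw [Real.lt_logb_iff_rpow_lt one_lt_two (by positivity)] at hlogb
    have hpow : (2:ℝ) ^ (-(μ:ℝ)) = ((2:ℝ) ^ μ)⁻¹ := by
      rw [Real.rpow_neg (by norm_num), Real.rpow_natCast]
    rw [hpow] at hlogb
    have hdzD : Metric.infDist z F ≤ D + Metric.diam (cube b ℓQ) :=
      infDist_le_setDist_add_diam hzQ hFne hbd
    have h2D : Metric.infDist z F ≤ 2 * D := by linarith
    rw [lt_div_iff₀ hℓ] at hlogb
    have h7 := mul_lt_mul_of_pos_left hlogb hP
    rw [← mul_assoc, mul_inv_cancel₀ hP.ne', one_mul] at h7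
    have h8 : (2:ℝ)^μ * (4 * Metric.infDist z F) ≤ (2:ℝ)^μ * (4 * (2 * D)) := by
      have := mul_le_mul_of_nonneg_left (by linarith : 4 * Metric.infDist z F ≤ 4 * (2 * D)) hP.le
      linarith
    rw [div_le_iff₀ (by positivity)]
    nlinarith
  have hD8 : ℓ / (8 * (2:ℝ) ^ μ) ≤ D := by
    rcases not_and_or.1 hz with h | h
    · exact hclaim x hx h
    · exact hclaim y hy h
  -- main estimate
  rw [bump_eq hℓ hμ hdx, bump_eq hℓ hμ hdy]
  refine le_trans (clamp_lip _ _) ?_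
  have hrw : (1 + (1 / (μ : ℝ)) * Real.logb 2 (4 * dx / ℓ))
      - (1 + (1 / (μ : ℝ)) * Real.logb 2 (4 * dy / ℓ))
      = (1 / (μ : ℝ)) * (Real.logb 2 (4 * dx / ℓ) - Real.logb 2 (4 * dy / ℓ)) := by ring
  rw [hrw, abs_mul, abs_of_nonneg hc]
  apply mul_le_mul_of_nonneg_left _ hc
  -- bound |logb 2 (4dx/ℓ) - logb 2 (4dy/ℓ)|
  have hAB : Real.logb 2 (4 * dx / ℓ) - Real.logb 2 (4 * dy / ℓ)
      = (Real.log dx - Real.log dy) / Real.log 2 := by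
    rw [Real.logb, Real.logb,
      Real.log_div (by positivity : (4:ℝ) * dx ≠ 0) hℓ.ne',
      Real.log_div (by positivity : (4:ℝ) * dy ≠ 0) hℓ.ne',
      Real.log_mul (by norm_num) hdx.ne', Real.log_mul (by norm_num) hdy.ne']
    ring
  rw [hAB, abs_div, abs_of_pos hlog2]
  have habs := abs_le.1 hlip
  have hdx2 : dx ≤ 2 * dy := by linarith
  have hdy2 : dy ≤ 2 * dx := by linarith
  have hA : |Real.log dx - Real.log dy| ≤ Real.log 2 := by
    rw [abs_le]
    constructor
    · have : Real.log dy - Real.log dx ≤ Real.log 2 := by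
        rw [← Real.log_div hdy.ne' hdx.ne']
        apply Real.log_le_log (by positivity)
        rw [div_le_iff₀ hdx]; linarith
      linarith
    · rw [← Real.log_div hdx.ne' hdy.ne']
      apply Real.log_le_log (by positivity)
      rw [div_le_iff₀ hdy]; linarith
  have hdxy2 : dist x y ≤ Real.sqrt n * ℓQ := cube_dist_le hℓQ.le hx hy
  have key : ∀ u v : ℝ, 0 < u → 0 < v → D ≤ v → |u - v| ≤ Real.sqrt n * ℓQ →
      Real.log u - Real.log v ≤ (Real.sqrt n * ℓQ) / D := by
    intro u v hu hv hDv habsuv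
    have h2 : Real.log u - Real.log v ≤ u / v - 1 := by
      rw [← Real.log_div hu.ne' hv.ne']
      exact Real.log_le_sub_one_of_pos (by positivity)
    have h3 : u / v - 1 = (u - v) / v := by field_simp
    have h4 : (u - v) / v ≤ |u - v| / v := (div_le_div_iff_of_pos_right hv).2 (le_abs_self _)
    have h5 : |u - v| / v ≤ |u - v| / D := div_le_div_of_nonneg_left (abs_nonneg _) hD0 hDv
    have h6 : |u - v| / D ≤ (Real.sqrt n * ℓQ) / D := (div_le_div_iff_of_pos_right hD0).2 habsuv
    linarith
  have hB : |Real.log dx - Real.log dy| ≤ (Real.sqrt n * ℓQ) / D := by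
    rw [abs_le]
    constructor
    · have := key dy dx hdy hdx hDdx (by rw [abs_sub_comm]; exact hlip.trans hdxy2)
      linarith
    · exact key dx dy hdx hdy hDdy (hlip.trans hdxy2)
  apply le_min
  · rw [div_le_one hlog2]; exact hA
  · have hstep : (Real.sqrt n * ℓQ) / D ≤ 8 * Real.sqrt n * (2:ℝ)^μ * ℓQ / ℓ := by
      rw [div_le_div_iff₀ hD0 hℓ]
      rw [div_le_iff₀ (by positivity : (0:ℝ) < 8 * (2:ℝ)^μ)] at hD8
      calc Real.sqrt n * ℓQ * ℓ ≤ (Real.sqrt n * ℓQ) * (D * (8 * (2:ℝ)^μ)) := by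
            apply mul_le_mul_of_nonneg_left hD8 (by positivity)
        _ = 8 * Real.sqrt n * (2:ℝ)^μ * ℓQ * D := by ring
    have heq : (8 * Real.sqrt n / Real.log 2) * ((2:ℝ)^μ * ℓQ / ℓ)
        = (8 * Real.sqrt n * (2:ℝ)^μ * ℓQ / ℓ) / Real.log 2 := by
      ring
    rw [heq]
    calc |Real.log dx - Real.log dy| / Real.log 2
        ≤ ((Real.sqrt n * ℓQ) / D) / Real.log 2 := (div_le_div_iff_of_pos_right hlog2).2 hB
      _ ≤ (8 * Real.sqrt n * (2:ℝ)^μ * ℓQ / ℓ) / Real.log 2 := (div_le_div_iff_of_pos_right hlog2).2 hstep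

lemma oscQ_le_of_pair {n : ℕ} {f : EuclideanSpace ℝ (Fin n) → ℝ}
    {b : EuclideanSpace ℝ (Fin n)} {ℓQ : ℝ} (hℓQ : 0 < ℓQ) {M : ℝ} (hM : 0 ≤ M)
    (hpair : ∀ x ∈ cube b ℓQ, ∀ y ∈ cube b ℓQ, |f x - f y| ≤ M) :
    oscQ f (cube b ℓQ) ≤ M := by
  set Q := cube b ℓQ with hQ
  have hcomp : IsCompact Q := isCompact_cube b hℓQ.le
  have hvol : volume Q < ⊤ := hcomp.measure_lt_top
  have hmeas : MeasurableSet Q := (isClosed_cube b ℓQ).measurableSet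
  set V := (volume Q).toReal with hV
  have hV0 : 0 ≤ V := ENNReal.toReal_nonneg
  have hinner : ∀ x ∈ Q, ‖∫ y in Q, |f x - f y|‖ ≤ M * V := by
    intro x hx
    exact norm_setIntegral_le_of_norm_le_const hvol
      (fun y hy => by rw [Real.norm_eq_abs, abs_abs]; exact hpair x hx y hy)
  have houter : ‖∫ x in Q, ∫ y in Q, |f x - f y|‖ ≤ (M * V) * V :=
    norm_setIntegral_le_of_norm_le_const hvol hinner
  have hI : ∫ x in Q, ∫ y in Q, |f x - f y| ≤ M * V ^ 2 := by
    have h1 : ∫ x in Q, ∫ y in Q, |f x - f y| ≤ ‖∫ x in Q, ∫ y in Q, |f x - f y|‖ :=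
      le_abs_self _
    calc ∫ x in Q, ∫ y in Q, |f x - f y| ≤ (M * V) * V := h1.trans houter
      _ = M * V ^ 2 := by ring
  rcases eq_or_lt_of_le hV0 with hV0' | hV0'
  · unfold oscQ
    rw [← hV, ← hV0', ]
    norm_num
    exact hM
  · unfold oscQ
    rw [← hV]
    have h2 : ((V : ℝ) ^ 2)⁻¹ * (M * V ^ 2) = M := by
      field_simp
    calc (V ^ 2)⁻¹ * ∫ x in Q, ∫ y in Q, |f x - f y|
        ≤ (V ^ 2)⁻¹ * (M * V ^ 2) := by
          apply mul_le_mul_of_nonneg_left hI (by positivity)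
      _ = M := h2

/-- there is a modulus of continuity `θ` (independent of the cube `S` and of
`μ`) with `ω_S(ψ^μ_S, t) ≤ (1/μ)·θ(2^μ t/ℓ(S))` for all `t > 0`; in particular there is
`C > 0` with `‖ψ^μ_S‖_{BMO(S)} ≤ C/μ`. -/
theorem bump_modulus_of_mean_oscillation (n : ℕ) (hn : 0 < n) :
    (∃ θ : ℝ → ℝ, IsModulus θ ∧
      ∀ (a : EuclideanSpace ℝ (Fin n)) (ℓ : ℝ), 0 < ℓ → ∀ μ : ℕ, 1 ≤ μ → ∀ t : ℝ, 0 < t →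
        omegaMod (bumpS a ℓ μ) (cube a ℓ) t ≤
          (1 / (μ : ℝ)) * θ ((2 : ℝ) ^ (μ : ℕ) * t / ℓ)) ∧
    ∃ C > (0 : ℝ), ∀ (a : EuclideanSpace ℝ (Fin n)) (ℓ : ℝ), 0 < ℓ →
      ∀ μ : ℕ, 1 ≤ μ → ∀ t : ℝ, 0 < t →
        omegaMod (bumpS a ℓ μ) (cube a ℓ) t ≤ C / (μ : ℝ) := by
  set K : ℝ := 8 * Real.sqrt n / Real.log 2 with hKdef
  have hK : 0 ≤ K := by positivity
  set θ : ℝ → ℝ := fun s => min 1 (K * s) with hθ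
  have hmain : ∀ (a : EuclideanSpace ℝ (Fin n)) (ℓ : ℝ), 0 < ℓ → ∀ μ : ℕ, 1 ≤ μ →
      ∀ t : ℝ, 0 < t → omegaMod (bumpS a ℓ μ) (cube a ℓ) t ≤
        (1 / (μ : ℝ)) * θ ((2 : ℝ) ^ (μ : ℕ) * t / ℓ) := by
    intro a ℓ hℓ μ hμ t ht
    have hc : (0 : ℝ) ≤ 1 / (μ : ℝ) := by positivity
    have hθnn : 0 ≤ θ ((2 : ℝ) ^ (μ : ℕ) * t / ℓ) := le_min zero_le_one (by positivity)
    apply Real.sSup_le _ (mul_nonneg hc hθnn)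
    rintro r ⟨b, ℓQ, hℓQ, hsub, hdiam, hℓQt, rfl⟩
    have hM : (0:ℝ) ≤ (1 / (μ : ℝ)) * min 1 (K * ((2 : ℝ) ^ μ * ℓQ / ℓ)) :=
      mul_nonneg hc (le_min zero_le_one (by positivity))
    have h1 : oscQ (bumpS a ℓ μ) (cube b ℓQ) ≤
        (1 / (μ : ℝ)) * min 1 (K * ((2 : ℝ) ^ μ * ℓQ / ℓ)) := by
      apply oscQ_le_of_pair hℓQ hM
      intro x hx y hy
      exact bump_pair_bound a b hℓ hℓQ hμ hdiam hx hy
    refine h1.trans ?_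
    apply mul_le_mul_of_nonneg_left _ hc
    apply min_le_min le_rfl
    apply mul_le_mul_of_nonneg_left _ hK
    gcongr
  refine ⟨⟨θ, ⟨?_, ?_, ?_, ?_, ?_⟩, hmain⟩, 1, one_pos, ?_⟩
  · intro t ht
    exact le_min zero_le_one (by positivity)
  · intro s hs u hu hsu
    exact min_le_min le_rfl (mul_le_mul_of_nonneg_left hsu hK)
  · refine ⟨1, ?_⟩
    rintro _ ⟨s, _, rfl⟩
    exact min_le_left _ _
  · simp [hθ]
  · exact (continuous_const.min (continuous_const.mul continuous_id)).continuousWithinAt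
  · intro a ℓ hℓ μ hμ t ht
    refine (hmain a ℓ hℓ μ hμ t ht).trans ?_
    have : θ ((2 : ℝ) ^ (μ : ℕ) * t / ℓ) ≤ 1 := min_le_left _ _
    calc (1 / (μ : ℝ)) * θ ((2 : ℝ) ^ (μ : ℕ) * t / ℓ) ≤ (1 / (μ : ℝ)) * 1 :=
          mul_le_mul_of_nonneg_left this (by positivity)
      _ = 1 / (μ : ℝ) := by ring
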